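/- arXiv:1606.04479 — 2 statements merged into one kernel-verified Lean document; each statement's English description precedes it below -/
import Mathlib

section
/- Fix β > 0. The single-particle mean m(λ) satisfies λ·( m(λ) − √(β/λ) ) → 3/4 as λ → +∞; equivalently, m(λ) = √(β/λ) + 3/(4λ) + o(1/λ) as λ → ∞. -/
open MeasureTheory Filter

noncomputable section

/-- Normalizing constant `c(λ) = ∫₀¹ e^{−λx − β/x} dx`. -/
def cpart (β l : ℝ) : ℝ := ∫ x in (0:ℝ)..1, Real.exp (-(l * x) - β / x)

/-- Single-particle mean `m(λ)`. -/
def mpart (β l : ℝ) : ℝ :=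
  (∫ x in (0:ℝ)..1, x * Real.exp (-(l * x) - β / x)) / cpart β l

/-- Single-particle variance `v(λ)`. -/
def vpart (β l : ℝ) : ℝ :=
  (∫ x in (0:ℝ)..1, x ^ 2 * Real.exp (-(l * x) - β / x)) / cpart β l - mpart β l ^ 2

namespace MeanAsymptotic

open Set Real Topology



def Ef (t s : ℝ) : ℝ := Real.exp (-(s^2 * t / (t + s)))
def bb (β t : ℝ) : ℝ := t^3/β - t
def Dn (β t : ℝ) : ℝ := ∫ s in (-t)..(bb β t), Ef t s
def Mn (β t : ℝ) : ℝ := ∫ s in (-t)..(bb β t), s * Ef t s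

lemma exponent_id {β t s : ℝ} (hβ : 0 < β) (ht : 0 < t) (hs : -t < s) :
    -(t^4/β * (β/t^3 * s + β/t^2)) - β/(β/t^3 * s + β/t^2)
      = -(2*t^2) + -(s^2 * t / (t + s)) := by
  have hts : 0 < t + s := by linarith
  have hx : β/t^3 * s + β/t^2 = β * (t+s) / t^3 := by field_simp; ring
  rw [hx]
  have ht3 : (t:ℝ)^3 ≠ 0 := by positivity
  field_simp
  ring


lemma endpoints_le {β t : ℝ} (hβ : 0 < β) (ht : 0 < t) : -t ≤ bb β t := by
  have : 0 ≤ t^3/β := by positivity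
  simp only [bb]; linarith

lemma subst_main {β t : ℝ} (hβ : 0 < β) (ht : 0 < t) (g : ℝ → ℝ)
    (hg : ∀ s, g (β/t^3 * s + β/t^2) = β/t^3 * s) :
    (∫ x in (0:ℝ)..1, Real.exp (-(t^4/β * x) - β / x)
      = (β/t^3) * Real.exp (-(2*t^2)) * Dn β t)
    ∧ (∫ x in (0:ℝ)..1, g x * Real.exp (-(t^4/β * x) - β / x)
      = (β/t^3)^2 * Real.exp (-(2*t^2)) * Mn β t) := by
  have hc : (β/t^3) ≠ 0 := by positivity
  have hab : -t ≤ bb β t := endpoints_le hβ ht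
  have e1 : β/t^3 * (-t) + β/t^2 = 0 := by field_simp; ring
  have e2 : β/t^3 * (bb β t) + β/t^2 = 1 := by
    simp only [bb]; field_simp; ring
  constructor
  · have key := intervalIntegral.integral_comp_mul_add
      (f := fun x => Real.exp (-(t^4/β * x) - β / x)) (a := -t) (b := bb β t) hc (β/t^2)
    rw [e1, e2] at key
    have congr1 : (∫ s in (-t)..(bb β t), Real.exp (-(t^4/β * (β/t^3 * s + β/t^2)) - β / (β/t^3 * s + β/t^2)))
        = ∫ s in (-t)..(bb β t), Real.exp (-(2*t^2)) * Ef t s := by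
      rw [intervalIntegral.integral_of_le hab, intervalIntegral.integral_of_le hab]
      refine setIntegral_congr_fun measurableSet_Ioc (fun s hs => ?_)
      rw [exponent_id hβ ht hs.1, Real.exp_add, Ef]
    rw [congr1, intervalIntegral.integral_const_mul] at key
    rw [Dn, mul_assoc, key, smul_eq_mul, ← mul_assoc, mul_inv_cancel₀ hc, one_mul]
  · have key := intervalIntegral.integral_comp_mul_add
      (f := fun x => g x * Real.exp (-(t^4/β * x) - β / x)) (a := -t) (b := bb β t) hc (β/t^2)
    rw [e1, e2] at key
    have congr1 : (∫ s in (-t)..(bb β t), g (β/t^3 * s + β/t^2) * Real.exp (-(t^4/β * (β/t^3 * s + β/t^2)) - β / (β/t^3 * s + β/t^2)))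
        = ∫ s in (-t)..(bb β t), (β/t^3 * Real.exp (-(2*t^2))) * (s * Ef t s) := by
      rw [intervalIntegral.integral_of_le hab, intervalIntegral.integral_of_le hab]
      refine setIntegral_congr_fun measurableSet_Ioc (fun s hs => ?_)
      rw [exponent_id hβ ht hs.1, Real.exp_add, Ef, hg]
      ring
    rw [congr1, intervalIntegral.integral_const_mul] at key
    rw [Mn, show (β/t^3)^2 * Real.exp (-(2*t^2)) * (∫ s in (-t)..(bb β t), s * Ef t s)
      = (β/t^3) * (β/t^3 * Real.exp (-(2*t^2)) * ∫ s in (-t)..(bb β t), s * Ef t s) by ring,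
      key, smul_eq_mul, ← mul_assoc, mul_inv_cancel₀ hc, one_mul]




lemma measurable_Ef (t : ℝ) : Measurable (Ef t) := by unfold Ef; fun_prop

lemma tendsto_bb {β : ℝ} (hβ : 0 < β) : Tendsto (bb β) atTop atTop := by
  apply tendsto_atTop_mono' atTop ?_ tendsto_id
  filter_upwards [eventually_ge_atTop (max 1 (2*β))] with t ht
  have h1 : (1:ℝ) ≤ t := le_trans (le_max_left _ _) ht
  have h2 : 2*β ≤ t := le_trans (le_max_right _ _) ht
  simp only [bb, id_eq]
  rw [le_sub_iff_add_le, le_div_iff₀ hβ]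
  nlinarith [mul_le_mul_of_nonneg_left h2 (by linarith : (0:ℝ) ≤ t), sq_nonneg (t-1), hβ.le]

lemma Ef_le {β t s : ℝ} (hβ : 0 < β) (ht : 1 ≤ t) (hs : s ∈ Set.Ioc (-t) (bb β t)) :
    Ef t s ≤ Real.exp (-s^2) + (Set.Ioi (0:ℝ)).indicator (fun s => Real.exp (1 - s)) s := by
  have hts : 0 < t + s := by have := hs.1; linarith
  rcases le_or_gt s 0 with h | h
  · have h1 : Ef t s ≤ Real.exp (-s^2) := by
      apply Real.exp_le_exp.2
      rw [neg_le_neg_iff, le_div_iff₀ hts]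
      nlinarith
    have h2 : 0 ≤ (Set.Ioi (0:ℝ)).indicator (fun s => Real.exp (1 - s)) s :=
      Set.indicator_nonneg (fun x _ => (Real.exp_pos _).le) s
    linarith
  · have h1 : Ef t s ≤ Real.exp (1 - s) := by
      apply Real.exp_le_exp.2
      rw [neg_le, ← sub_nonneg]
      have key : 0 ≤ (s^2 * t / (t+s)) - (s - 1) := by
        rw [sub_nonneg, le_div_iff₀ hts]
        nlinarith [sq_nonneg (s-1), mul_le_mul_of_nonneg_left ht (sq_nonneg (s-1)), sq_nonneg s, mul_pos h hts]
      linarith [key]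
    rw [Set.indicator_of_mem (Set.mem_Ioi.2 h)]
    linarith [Real.exp_pos (-s^2), h1]

lemma integrable_G1 : Integrable (fun s : ℝ =>
    Real.exp (-s^2) + (Set.Ioi (0:ℝ)).indicator (fun s => Real.exp (1 - s)) s) := by
  apply Integrable.add
  · simpa using integrable_exp_neg_mul_sq (b := 1) one_pos
  · rw [integrable_indicator_iff measurableSet_Ioi]
    have : IntegrableOn (fun s : ℝ => Real.exp 1 * Real.exp (-1 * s)) (Set.Ioi 0) :=
      (exp_neg_integrableOn_Ioi 0 one_pos).const_mul _
    apply this.congr_fun ?_ measurableSet_Ioi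
    intro x _
    simp only [← Real.exp_add]; ring_nf

def G1 (s : ℝ) : ℝ := Real.exp (-s^2) + (Set.Ioi (0:ℝ)).indicator (fun s => Real.exp (1 - s)) s

lemma G1_nonneg (s : ℝ) : 0 ≤ G1 s := by
  unfold G1
  have := Set.indicator_nonneg (s := Set.Ioi (0:ℝ)) (f := fun s : ℝ => Real.exp (1 - s))
    (fun x _ => (Real.exp_pos _).le) s
  linarith [Real.exp_pos (-s^2)]

lemma tendsto_Ef (s : ℝ) : Tendsto (fun t : ℝ => Ef t s) atTop (𝓝 (Real.exp (-s^2))) := by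
  have h0 : Tendsto (fun t : ℝ => s / t) atTop (𝓝 0) := tendsto_const_nhds.div_atTop tendsto_id
  have h1 : Tendsto (fun t : ℝ => 1 + s / t) atTop (𝓝 1) := by
    simpa using tendsto_const_nhds.add h0
  have h2 : Tendsto (fun t : ℝ => -(s^2 / (1 + s / t))) atTop (𝓝 (-s^2)) := by
    have := (tendsto_const_nhds (x := s^2)).div h1 one_ne_zero
    simpa using this.neg
  have h3 := (Real.continuous_exp.tendsto _).comp h2
  apply h3.congr'
  filter_upwards [eventually_gt_atTop (|s|)] with t ht
  have hts : 0 < t + s := by have := neg_abs_le s; linarith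
  have htpos : 0 < t := lt_of_le_of_lt (abs_nonneg s) ht
  show Real.exp (-(s^2/(1+s/t))) = Ef t s
  unfold Ef
  congr 1
  rw [neg_inj, show 1 + s/t = (t+s)/t by field_simp, div_div_eq_mul_div]

lemma eventually_mem_Ioc {β : ℝ} (hβ : 0 < β) (s : ℝ) :
    ∀ᶠ t in atTop, s ∈ Set.Ioc (-t) (bb β t) := by
  filter_upwards [eventually_gt_atTop |s|, (tendsto_bb hβ).eventually_ge_atTop s] with t h1 h2
  exact ⟨by linarith [neg_abs_le s], h2⟩

lemma tendsto_Dn {β : ℝ} (hβ : 0 < β) : Tendsto (fun t => Dn β t) atTop (𝓝 (Real.sqrt π)) := by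
  have hlim : Tendsto (fun t => ∫ s : ℝ, (Set.Ioc (-t) (bb β t)).indicator (Ef t) s) atTop
      (𝓝 (∫ s : ℝ, Real.exp (-s^2))) := by
    apply tendsto_integral_filter_of_dominated_convergence (bound := G1)
    · filter_upwards with t
      exact ((measurable_Ef t).indicator measurableSet_Ioc).aestronglyMeasurable
    · filter_upwards [eventually_ge_atTop 1] with t ht
      filter_upwards with s
      by_cases h : s ∈ Set.Ioc (-t) (bb β t)
      · rw [Set.indicator_of_mem h, Real.norm_eq_abs, abs_of_pos (by unfold Ef; positivity)]
        exact Ef_le hβ ht h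
      · rw [Set.indicator_of_notMem h]
        simpa using G1_nonneg s
    · exact integrable_G1
    · filter_upwards with s
      apply (tendsto_Ef s).congr'
      filter_upwards [eventually_mem_Ioc hβ s] with t h using (Set.indicator_of_mem h _).symm
  have hval : ∫ s : ℝ, Real.exp (-s^2) = Real.sqrt π := by
    have := integral_gaussian 1
    simpa using this
  rw [hval] at hlim
  apply Tendsto.congr' _ hlim
  filter_upwards [eventually_gt_atTop 0] with t ht
  rw [Dn, intervalIntegral.integral_of_le (endpoints_le hβ ht),
    ← integral_indicator measurableSet_Ioc]

lemma rpow_four (x : ℝ) : x ^ (4:ℝ) = x ^ (4:ℕ) := by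
  rw [← Real.rpow_natCast x 4]; norm_num

lemma gaussian_integral_val : ∫ s : ℝ, Real.exp (-s^2) = Real.sqrt π := by
  have := integral_gaussian 1
  simpa using this

lemma gaussian_moment4 : ∫ s : ℝ, s^4 * Real.exp (-s^2) = 3/4 * Real.sqrt π := by
  have h1 : ∫ s : ℝ, s^4 * Real.exp (-s^2) = ∫ s : ℝ, (fun y => y^4 * Real.exp (-y^2)) |s| := by
    congr 1; funext s
    simp only [← abs_pow, abs_of_nonneg (a := s^4) (by positivity),
      abs_of_nonneg (a := s^2) (by positivity)]
  rw [h1, integral_comp_abs (f := fun y => y^4 * Real.exp (-y^2))]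
  have h2 : ∫ x in Set.Ioi (0:ℝ), x^4 * Real.exp (-x^2)
      = ∫ x in Set.Ioi (0:ℝ), x^(4:ℝ) * Real.exp (-x^(2:ℝ)) := by
    refine setIntegral_congr_fun measurableSet_Ioi (fun x hx => ?_)
    rw [rpow_four, Real.rpow_two]
  rw [h2, integral_rpow_mul_exp_neg_rpow two_pos (by norm_num)]
  have h52 : Real.Gamma ((4+1)/2) = 3/4 * Real.sqrt π := by
    rw [show ((4:ℝ)+1)/2 = 3/2 + 1 by norm_num, Real.Gamma_add_one (by norm_num),
      show (3:ℝ)/2 = 1/2 + 1 by norm_num, Real.Gamma_add_one (by norm_num),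
      Real.Gamma_one_half_eq]
    ring
  rw [h52]; ring

def G2 (s : ℝ) : ℝ := 2*s^4*Real.exp (-s^2) + 2*s^2*Real.exp (-s^2)
  + (Set.Ioi (0:ℝ)).indicator (fun s => s^4 * Real.exp (1 - s)) s

lemma G2_ind_nonneg (s : ℝ) : 0 ≤ (Set.Ioi (0:ℝ)).indicator (fun s => s^4 * Real.exp (1 - s)) s :=
  Set.indicator_nonneg (fun x _ => by positivity) s

lemma G2_nonneg (s : ℝ) : 0 ≤ G2 s := by
  have := G2_ind_nonneg s
  have h1 : (0:ℝ) ≤ 2*s^4*Real.exp (-s^2) := by positivity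
  have h2 : (0:ℝ) ≤ 2*s^2*Real.exp (-s^2) := by positivity
  unfold G2; linarith

lemma integrable_G2 : Integrable G2 := by
  unfold G2
  apply Integrable.add
  apply Integrable.add
  · have h := integrable_rpow_mul_exp_neg_mul_sq (b := 1) one_pos (s := 4) (by norm_num)
    have h2 := (h.const_mul 2)
    apply h2.congr
    filter_upwards with x
    rw [rpow_four]; ring_nf
  · have h := integrable_rpow_mul_exp_neg_mul_sq (b := 1) one_pos (s := 2) (by norm_num)
    have h2 := (h.const_mul 2)
    apply h2.congr
    filter_upwards with x
    rw [Real.rpow_two]; ring_nf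
  · rw [integrable_indicator_iff measurableSet_Ioi]
    have h := integrableOn_rpow_mul_exp_neg_rpow (p := 1) (s := 4) (by norm_num) one_pos
    have h2 := h.const_mul (Real.exp 1)
    apply IntegrableOn.congr_fun h2 ?_ measurableSet_Ioi
    intro x _
    simp only [rpow_four, Real.rpow_one]
    rw [show ∀ x:ℝ, 1 - x = 1 + (-x) from fun x => by ring, Real.exp_add]
    ring

lemma Ef_exp_w {t s : ℝ} (hts : 0 < t + s) :
    Ef t s = Real.exp (-s^2) * Real.exp (s^3/(t+s)) := by
  unfold Ef
  rw [← Real.exp_add]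
  congr 1
  field_simp
  ring

lemma bound2 {β t s : ℝ} (hβ : 0 < β) (ht : 1 ≤ t) (hs : s ∈ Set.Ioc (-t) (bb β t)) :
    |t * (s * (Ef t s - Real.exp (-s^2)))| ≤ G2 s := by
  have hts : 0 < t + s := by have := hs.1; linarith
  have htpos : (0:ℝ) < t := by linarith
  have hEf : Ef t s = Real.exp (-s^2) * Real.exp (s^3/(t+s)) := Ef_exp_w hts
  have habs : |t * (s * (Ef t s - Real.exp (-s^2)))|
      = t * (|s| * (Real.exp (-s^2) * |Real.exp (s^3/(t+s)) - 1|)) := by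
    rw [abs_mul, abs_mul, abs_of_pos htpos, hEf, ← mul_sub_one, abs_mul,
      abs_of_pos (Real.exp_pos _)]
  rw [habs]
  rcases le_or_gt s 0 with hsn | hsp
  · -- negative branch
    have hw : s^3/(t+s) ≤ 0 := div_nonpos_of_nonpos_of_nonneg (by nlinarith) hts.le
    have h1 : |Real.exp (s^3/(t+s)) - 1| = 1 - Real.exp (s^3/(t+s)) := by
      rw [abs_of_nonpos (by linarith [Real.exp_le_one_iff.2 hw])]
      ring
    rw [h1]
    have hind := G2_ind_nonneg s
    rcases le_or_gt (-(t/2)) s with hcase | hcase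
    · -- s ∈ [-t/2, 0]
      have h2 : 1 - Real.exp (s^3/(t+s)) ≤ -(s^3/(t+s)) := by
        have := Real.add_one_le_exp (s^3/(t+s))
        linarith
      have h3 : -(s^3/(t+s)) ≤ -2*s^3/t := by
        rw [show -(s^3/(t+s)) = (-s^3)/(t+s) by ring,
          show -2*s^3/t = (-2*s^3)/t by ring,
          div_le_div_iff₀ hts htpos]
        nlinarith [mul_nonneg (by nlinarith : (0:ℝ) ≤ -s^3) (by linarith : (0:ℝ) ≤ t + 2*s)]
      have hchain : t * (|s| * (Real.exp (-s^2) * (1 - Real.exp (s^3/(t+s)))))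
          ≤ t * (|s| * (Real.exp (-s^2) * (-2*s^3/t))) := by
        apply mul_le_mul_of_nonneg_left ?_ htpos.le
        apply mul_le_mul_of_nonneg_left ?_ (abs_nonneg s)
        apply mul_le_mul_of_nonneg_left (by linarith) (Real.exp_pos _).le
      have heq : t * (|s| * (Real.exp (-s^2) * (-2*s^3/t))) = 2*s^4*Real.exp (-s^2) := by
        rw [abs_of_nonpos hsn]
        field_simp
      rw [heq] at hchain
      have hpos2 : (0:ℝ) ≤ 2*s^2*Real.exp (-s^2) := by positivity
      unfold G2; linarith
    · -- s < -t/2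
      have hW0 : 0 < Real.exp (s^3/(t+s)) := Real.exp_pos _
      have h2 : 1 - Real.exp (s^3/(t+s)) ≤ 1 := by linarith
      have ht2s : t ≤ -2*s := by linarith
      have hchain : t * (|s| * (Real.exp (-s^2) * (1 - Real.exp (s^3/(t+s)))))
          ≤ (-2*s) * (|s| * (Real.exp (-s^2) * 1)) := by
        apply mul_le_mul ht2s ?_ ?_ (by linarith)
        · apply mul_le_mul_of_nonneg_left ?_ (abs_nonneg s)
          apply mul_le_mul_of_nonneg_left h2 (Real.exp_pos _).le
        · exact mul_nonneg (abs_nonneg s) (mul_nonneg (Real.exp_pos _).le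
            (by linarith [Real.exp_le_one_iff.2 hw]))
      have heq : (-2*s) * (|s| * (Real.exp (-s^2) * 1)) = 2*s^2*Real.exp (-s^2) := by
        rw [abs_of_nonpos hsn]; ring
      rw [heq] at hchain
      have hpos2 : (0:ℝ) ≤ 2*s^4*Real.exp (-s^2) := by positivity
      unfold G2; linarith
  · -- positive branch
    have hw : 0 ≤ s^3/(t+s) := by positivity
    have hexpw : |Real.exp (s^3/(t+s)) - 1| = Real.exp (s^3/(t+s)) - 1 :=
      abs_of_nonneg (by linarith [Real.one_le_exp hw])
    have hkey : Real.exp (s^3/(t+s)) - 1 ≤ (s^3/(t+s)) * Real.exp (s^3/(t+s)) := by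
      have h := Real.add_one_le_exp (-(s^3/(t+s)))
      have h2 := mul_le_mul_of_nonneg_right h (Real.exp_pos (s^3/(t+s))).le
      rw [← Real.exp_add, neg_add_cancel, Real.exp_zero] at h2
      nlinarith
    have hstep : t * (|s| * (Real.exp (-s^2) * |Real.exp (s^3/(t+s)) - 1|))
        ≤ (t*s*(s^3/(t+s))) * Ef t s := by
      rw [hexpw, abs_of_pos hsp, Ef_exp_w hts]
      have b1 : Real.exp (-s^2) * (Real.exp (s^3/(t+s)) - 1)
          ≤ Real.exp (-s^2) * ((s^3/(t+s)) * Real.exp (s^3/(t+s))) :=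
        mul_le_mul_of_nonneg_left hkey (Real.exp_pos _).le
      calc t * (s * (Real.exp (-s^2) * (Real.exp (s^3/(t+s)) - 1)))
          ≤ t * (s * (Real.exp (-s^2) * ((s^3/(t+s)) * Real.exp (s^3/(t+s))))) := by
            apply mul_le_mul_of_nonneg_left ?_ htpos.le
            exact mul_le_mul_of_nonneg_left b1 hsp.le
        _ = (t*s*(s^3/(t+s))) * (Real.exp (-s^2) * Real.exp (s^3/(t+s))) := by ring
    have hts4 : t*s*(s^3/(t+s)) ≤ s^4 := by
      rw [show t*s*(s^3/(t+s)) = t*s^4/(t+s) by ring, div_le_iff₀ hts]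
      nlinarith [pow_pos hsp 5]
    have hEfpos : 0 ≤ Ef t s := by unfold Ef; positivity
    have hEfle : Ef t s ≤ Real.exp (1 - s) := by
      unfold Ef
      apply Real.exp_le_exp.2
      rw [neg_le, ← sub_nonneg]
      have key : 0 ≤ (s^2 * t / (t+s)) - (s - 1) := by
        rw [sub_nonneg, le_div_iff₀ hts]
        nlinarith [sq_nonneg (s-1), mul_le_mul_of_nonneg_left ht (sq_nonneg (s-1)), sq_nonneg s,
          mul_pos hsp hts]
      linarith [key]
    have hfinal : (t*s*(s^3/(t+s))) * Ef t s ≤ s^4 * Real.exp (1 - s) := by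
      calc (t*s*(s^3/(t+s))) * Ef t s ≤ s^4 * Ef t s := mul_le_mul_of_nonneg_right hts4 hEfpos
        _ ≤ s^4 * Real.exp (1 - s) := mul_le_mul_of_nonneg_left hEfle (by positivity)
    have hind : (Set.Ioi (0:ℝ)).indicator (fun s => s^4 * Real.exp (1 - s)) s
        = s^4 * Real.exp (1 - s) := Set.indicator_of_mem (Set.mem_Ioi.2 hsp) _
    have hpos1 : (0:ℝ) ≤ 2*s^4*Real.exp (-s^2) := by positivity
    have hpos2 : (0:ℝ) ≤ 2*s^2*Real.exp (-s^2) := by positivity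
    unfold G2
    rw [hind]
    linarith

lemma tendsto_H (s : ℝ) : Tendsto (fun t : ℝ => t * (s * (Ef t s - Real.exp (-s^2)))) atTop
    (𝓝 (s^4 * Real.exp (-s^2))) := by
  by_cases hs : s = 0
  · subst hs; simpa using tendsto_const_nhds
  -- w t := s³/(t+s) → 0 within ≠ 0
  have hw0 : Tendsto (fun t : ℝ => s^3/(t+s)) atTop (𝓝 0) :=
    tendsto_const_nhds.div_atTop (tendsto_atTop_add_const_right _ s tendsto_id)
  have hwne : ∀ᶠ t : ℝ in atTop, s^3/(t+s) ≠ 0 := by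
    filter_upwards [eventually_gt_atTop (|s|)] with t ht
    have hts : 0 < t + s := by have := neg_abs_le s; linarith
    exact div_ne_zero (pow_ne_zero _ hs) hts.ne'
  have hw : Tendsto (fun t : ℝ => s^3/(t+s)) atTop (𝓝[≠] 0) :=
    tendsto_nhdsWithin_of_tendsto_nhds_of_eventually_within _ hw0 hwne
  have hslope : Tendsto (fun w : ℝ => (Real.exp w - 1)/w) (𝓝[≠] 0) (𝓝 1) := by
    have h := (Real.hasDerivAt_exp 0)
    rw [hasDerivAt_iff_tendsto_slope] at h
    simp only [Real.exp_zero] at h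
    apply h.congr
    intro w
    simp [slope, Function.comp, div_eq_inv_mul]
  have h1 : Tendsto (fun t : ℝ => (Real.exp (s^3/(t+s)) - 1)/(s^3/(t+s))) atTop (𝓝 1) :=
    hslope.comp hw
  have h2 : Tendsto (fun t : ℝ => t * (s^3/(t+s))) atTop (𝓝 (s^3)) := by
    have h0 : Tendsto (fun t : ℝ => s / t) atTop (𝓝 0) := tendsto_const_nhds.div_atTop tendsto_id
    have hden : Tendsto (fun t : ℝ => 1 + s / t) atTop (𝓝 1) := by
      simpa using tendsto_const_nhds.add h0
    have := (tendsto_const_nhds (x := s^3)).div hden one_ne_zero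
    apply Tendsto.congr' ?_ (by simpa using this)
    filter_upwards [eventually_gt_atTop (|s|)] with t ht
    have hts : 0 < t + s := by have := neg_abs_le s; linarith
    have htpos : 0 < t := lt_of_le_of_lt (abs_nonneg s) ht
    simp only [Pi.div_apply]
    field_simp
  have hmain : Tendsto (fun t : ℝ =>
      (s * Real.exp (-s^2)) * ((t * (s^3/(t+s))) * ((Real.exp (s^3/(t+s)) - 1)/(s^3/(t+s)))))
      atTop (𝓝 ((s * Real.exp (-s^2)) * (s^3 * 1))) :=
    tendsto_const_nhds.mul (h2.mul h1)
  have hval : (s * Real.exp (-s^2)) * (s^3 * 1) = s^4 * Real.exp (-s^2) := by ring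
  rw [hval] at hmain
  apply Tendsto.congr' ?_ hmain
  filter_upwards [eventually_gt_atTop (|s|), hwne] with t ht hne
  have hts : 0 < t + s := by have := neg_abs_le s; linarith
  rw [Ef_exp_w hts]
  field_simp

lemma intervalIntegrable_of_bounded {f : ℝ → ℝ} {a b C : ℝ} (hab : a ≤ b)
    (hm : Measurable f) (hb : ∀ x ∈ Set.Ioc a b, ‖f x‖ ≤ C) :
    IntervalIntegrable f volume a b := by
  rw [intervalIntegrable_iff_integrableOn_Ioc_of_le hab]
  refine Measure.integrableOn_of_bounded (M := C) (by simp [measure_Ioc_lt_top.ne])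
    hm.aestronglyMeasurable ?_
  filter_upwards [ae_restrict_mem measurableSet_Ioc] with x hx using hb x hx

lemma Ef_le_one {t s : ℝ} (hts : 0 ≤ t + s) (ht : 0 ≤ t) : Ef t s ≤ 1 := by
  unfold Ef
  rw [show (1:ℝ) = Real.exp 0 by simp]
  apply Real.exp_le_exp.2
  rw [neg_nonpos]
  positivity

lemma iiMn1 {β t : ℝ} (hβ : 0 < β) (ht : 0 < t) :
    IntervalIntegrable (fun s => s * (Ef t s - Real.exp (-s^2))) volume (-t) (bb β t) := by
  apply intervalIntegrable_of_bounded (C := (|t| + |bb β t|) * 2) (endpoints_le hβ ht)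
    (by unfold Ef; fun_prop)
  intro s hsm
  have hts : 0 ≤ t + s := by have := hsm.1; linarith
  have hsabs : |s| ≤ |t| + |bb β t| := by
    rw [abs_le]
    constructor
    · have := hsm.1; have h1 := le_abs_self t; have h2 := abs_nonneg (bb β t); linarith
    · have := hsm.2; have h1 := le_abs_self (bb β t); have h2 := abs_nonneg t; linarith
  have hE1 : Ef t s ≤ 1 := Ef_le_one hts ht.le
  have hE0 : 0 ≤ Ef t s := by unfold Ef; positivity
  have he1 : Real.exp (-s^2) ≤ 1 := Real.exp_le_one_iff.2 (neg_nonpos.2 (sq_nonneg s))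
  rw [Real.norm_eq_abs, abs_mul]
  have hd : |Ef t s - Real.exp (-s^2)| ≤ 2 := by
    rw [abs_le]
    constructor <;> nlinarith [Real.exp_pos (-s^2)]
  exact mul_le_mul hsabs hd (abs_nonneg _) (by positivity)

lemma iisg : ∀ a b : ℝ, IntervalIntegrable (fun s => s * Real.exp (-s^2)) volume a b :=
  fun a b => (Continuous.mul continuous_id (by continuity)).intervalIntegrable a b

lemma Mn2_eval (a b : ℝ) : ∫ s in a..b, s * Real.exp (-s^2)
    = (Real.exp (-a^2) - Real.exp (-b^2))/2 := by
  have hderiv : ∀ x ∈ Set.uIcc a b, HasDerivAt (fun s : ℝ => -Real.exp (-s^2)/2)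
      (x * Real.exp (-x^2)) x := by
    intro x _
    have h1 : HasDerivAt (fun s : ℝ => -s^2) (-(2*x)) x := by
      simpa using ((hasDerivAt_pow 2 x).fun_neg)
    have h2 := (h1.exp).fun_neg.div_const 2
    rw [show x * Real.exp (-x^2) = -(Real.exp (-x ^ 2) * -(2 * x)) / 2 by ring]
    exact h2
  rw [intervalIntegral.integral_eq_sub_of_hasDerivAt hderiv (iisg a b)]
  ring

lemma Mn_split {β t : ℝ} (hβ : 0 < β) (ht : 0 < t) :
    Mn β t = (∫ s in (-t)..(bb β t), s * (Ef t s - Real.exp (-s^2)))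
      + (Real.exp (-(-t)^2) - Real.exp (-(bb β t)^2))/2 := by
  rw [← Mn2_eval, ← intervalIntegral.integral_add (iiMn1 hβ ht) (iisg _ _), Mn]
  congr 1
  funext s
  ring

lemma eventually_le_bb {β : ℝ} (hβ : 0 < β) : ∀ᶠ t : ℝ in atTop, t ≤ bb β t := by
  filter_upwards [eventually_ge_atTop (max 1 (2*β))] with t ht
  have h1 : (1:ℝ) ≤ t := le_trans (le_max_left _ _) ht
  have h2 : 2*β ≤ t := le_trans (le_max_right _ _) ht
  simp only [bb]
  rw [le_sub_iff_add_le, le_div_iff₀ hβ]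
  nlinarith [mul_le_mul_of_nonneg_left h2 (by linarith : (0:ℝ) ≤ t), sq_nonneg (t-1), hβ.le]

lemma tendsto_texp : Tendsto (fun t : ℝ => t * Real.exp (-t^2)) atTop (𝓝 0) := by
  apply squeeze_zero' (f := fun t : ℝ => t * Real.exp (-t^2)) (g := fun t : ℝ => t * Real.exp (-t))
  · filter_upwards [eventually_ge_atTop 0] with t ht; positivity
  · filter_upwards [eventually_ge_atTop 1] with t ht
    apply mul_le_mul_of_nonneg_left (Real.exp_le_exp.2 (by nlinarith)) (by linarith)
  · simpa using tendsto_pow_mul_exp_neg_atTop_nhds_zero 1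

lemma tendsto_tMn2 {β : ℝ} (hβ : 0 < β) :
    Tendsto (fun t => t * ((Real.exp (-(-t)^2) - Real.exp (-(bb β t)^2))/2)) atTop (𝓝 0) := by
  have h2 : Tendsto (fun t : ℝ => t * Real.exp (-(bb β t)^2)) atTop (𝓝 0) := by
    apply squeeze_zero' (g := fun t : ℝ => t * Real.exp (-t^2))
    · filter_upwards [eventually_ge_atTop 0] with t ht; positivity
    · filter_upwards [eventually_le_bb hβ, eventually_ge_atTop 0] with t hbb ht
      apply mul_le_mul_of_nonneg_left (Real.exp_le_exp.2 (by nlinarith)) ht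
    · exact tendsto_texp
  have h3 := (tendsto_texp.sub h2).div_const 2
  simp only [sub_self, zero_div] at h3
  apply Tendsto.congr ?_ h3
  intro t
  rw [neg_sq]
  ring

lemma tendsto_tMn1 {β : ℝ} (hβ : 0 < β) :
    Tendsto (fun t => t * ∫ s in (-t)..(bb β t), s * (Ef t s - Real.exp (-s^2))) atTop
      (𝓝 (3/4 * Real.sqrt π)) := by
  have hlim : Tendsto (fun t => ∫ s : ℝ,
      (Set.Ioc (-t) (bb β t)).indicator (fun s => t * (s * (Ef t s - Real.exp (-s^2)))) s) atTop
      (𝓝 (∫ s : ℝ, s^4 * Real.exp (-s^2))) := by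
    apply tendsto_integral_filter_of_dominated_convergence (bound := G2)
    · filter_upwards with t
      apply Measurable.aestronglyMeasurable
      apply Measurable.indicator ?_ measurableSet_Ioc
      unfold Ef; fun_prop
    · filter_upwards [eventually_ge_atTop 1] with t ht
      filter_upwards with s
      by_cases h : s ∈ Set.Ioc (-t) (bb β t)
      · rw [Set.indicator_of_mem h, Real.norm_eq_abs]
        exact bound2 hβ ht h
      · rw [Set.indicator_of_notMem h]
        simpa using G2_nonneg s
    · exact integrable_G2
    · filter_upwards with s
      apply (tendsto_H s).congr'
      filter_upwards [eventually_mem_Ioc hβ s] with t h using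
        (Set.indicator_of_mem h (fun s => t * (s * (Ef t s - Real.exp (-s^2))))).symm
  rw [gaussian_moment4] at hlim
  apply Tendsto.congr' _ hlim
  filter_upwards [eventually_gt_atTop 0] with t ht
  rw [integral_indicator measurableSet_Ioc,
    ← intervalIntegral.integral_of_le (endpoints_le hβ ht),
    intervalIntegral.integral_const_mul]

lemma tendsto_tMn {β : ℝ} (hβ : 0 < β) :
    Tendsto (fun t => t * Mn β t) atTop (𝓝 (3/4 * Real.sqrt π)) := by
  have h := (tendsto_tMn1 hβ).add (tendsto_tMn2 hβ)
  rw [add_zero] at h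
  apply Tendsto.congr' _ h
  filter_upwards [eventually_gt_atTop 0] with t ht
  rw [Mn_split hβ ht]
  ring

lemma measurable_f (β l : ℝ) : Measurable (fun x : ℝ => Real.exp (-(l * x) - β / x)) := by
  fun_prop

lemma f_le_one {β l : ℝ} (hβ : 0 < β) (hl : 0 ≤ l) {x : ℝ} (hx : x ∈ Set.Ioc (0:ℝ) 1) :
    ‖Real.exp (-(l * x) - β / x)‖ ≤ 1 := by
  rw [Real.norm_eq_abs, abs_of_pos (Real.exp_pos _), show (1:ℝ) = Real.exp 0 by simp]
  apply Real.exp_le_exp.2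
  have h1 : 0 < x := hx.1
  have h2 : 0 ≤ β / x := le_of_lt (div_pos hβ h1)
  nlinarith [mul_nonneg hl h1.le]

lemma cpart_pos {β l : ℝ} (hβ : 0 < β) (hl : 0 ≤ l) : 0 < cpart β l := by
  apply intervalIntegral.intervalIntegral_pos_of_pos_on
    (intervalIntegrable_of_bounded zero_le_one (measurable_f β l) (fun x hx => f_le_one hβ hl hx))
    (fun x _ => Real.exp_pos _) zero_lt_one

lemma xf_le_one {β l : ℝ} (hβ : 0 < β) (hl : 0 ≤ l) {x : ℝ} (hx : x ∈ Set.Ioc (0:ℝ) 1) :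
    ‖x * Real.exp (-(l * x) - β / x)‖ ≤ 1 := by
  rw [Real.norm_eq_abs, abs_mul, abs_of_pos hx.1, abs_of_pos (Real.exp_pos _)]
  have h1 := f_le_one hβ hl hx
  rw [Real.norm_eq_abs, abs_of_pos (Real.exp_pos _)] at h1
  nlinarith [hx.1.le, hx.2, Real.exp_pos (-(l * x) - β / x)]

lemma tendsto_sqrt_atTop : Tendsto Real.sqrt atTop atTop := by
  rw [tendsto_atTop_atTop]
  intro b
  refine ⟨(max b 0)^2, fun a ha => le_trans (le_max_left b 0) ?_⟩
  rw [← Real.sqrt_sq (le_max_right b 0)]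
  exact Real.sqrt_le_sqrt ha

end MeanAsymptotic

open MeanAsymptotic in
/-- `m(λ) = √(β/λ) + 3/(4λ) + o(1/λ)` as `λ → ∞`. -/
theorem mean_asymptotic (β : ℝ) (hβ : 0 < β) :
    Tendsto (fun l : ℝ => l * (mpart β l - Real.sqrt (β / l))) atTop (nhds (3 / 4)) := by
  have hsπ : Real.sqrt Real.pi ≠ 0 := (Real.sqrt_pos.2 Real.pi_pos).ne'
  have hphi : Tendsto (fun t => t * Mn β t / Dn β t) atTop (nhds (3/4)) := by
    have h := (tendsto_tMn hβ).div (tendsto_Dn hβ) hsπ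
    rw [show (3/4 * Real.sqrt Real.pi) / Real.sqrt Real.pi = 3/4 by field_simp] at h
    exact h
  have hmul : Tendsto (fun l : ℝ => β * l) atTop atTop :=
    Tendsto.const_mul_atTop hβ tendsto_id
  have hT : Tendsto (fun l : ℝ => Real.sqrt (Real.sqrt (β * l))) atTop atTop :=
    tendsto_sqrt_atTop.comp (tendsto_sqrt_atTop.comp hmul)
  have hcomp := hphi.comp hT
  apply Tendsto.congr' _ hcomp
  filter_upwards [eventually_ge_atTop 1] with l hl
  have hlpos : (0:ℝ) < l := by linarith
  simp only [Function.comp]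
  set t := Real.sqrt (Real.sqrt (β * l)) with htdef
  have htpos : 0 < t := Real.sqrt_pos.2 (Real.sqrt_pos.2 (by positivity))
  have ht2 : t^2 = Real.sqrt (β*l) := Real.sq_sqrt (Real.sqrt_nonneg _)
  have ht4 : t^4 = β*l := by
    rw [show t^4 = (t^2)^2 by ring, ht2, Real.sq_sqrt (by positivity)]
  have hl4 : t^4/β = l := by rw [ht4]; field_simp
  have hsq : Real.sqrt (β/l) = β/t^2 := by
    rw [show β/l = (β/t^2)^2 by
      rw [div_pow, show ((t:ℝ)^2)^2 = t^4 by ring, ht4]; field_simp]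
    exact Real.sqrt_sq (by positivity)
  have hC : 0 < cpart β l := cpart_pos hβ hlpos.le
  have hsub := subst_main hβ htpos (fun x => x - β/t^2) (fun s => by ring)
  rw [hsq, ← hl4]
  rw [← hl4] at hC
  -- integrability
  have hiif : IntervalIntegrable (fun x => Real.exp (-(t^4/β * x) - β / x)) volume 0 1 :=
    intervalIntegrable_of_bounded zero_le_one (measurable_f β (t^4/β))
      (fun x hx => f_le_one hβ (by positivity) hx)
  have hiixf : IntervalIntegrable (fun x => x * Real.exp (-(t^4/β * x) - β / x)) volume 0 1 :=
    intervalIntegrable_of_bounded zero_le_one (by fun_prop)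
      (fun x hx => xf_le_one hβ (by positivity) hx)
  have hsubN : (∫ x in (0:ℝ)..1, (x - β/t^2) * Real.exp (-(t^4/β * x) - β / x))
      = (∫ x in (0:ℝ)..1, x * Real.exp (-(t^4/β * x) - β / x)) - (β/t^2) * cpart β (t^4/β) := by
    simp only [sub_mul]
    rw [intervalIntegral.integral_sub hiixf (hiif.const_mul _),
      intervalIntegral.integral_const_mul]
    rfl
  have hE2 := hsub.2
  rw [hsubN] at hE2
  have hE1 : cpart β (t^4/β) = β / t^3 * Real.exp (-(2*t^2)) * Dn β t := hsub.1
  -- positivity of Dn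
  have hfac : 0 < (β/t^3) * Real.exp (-(2*t^2)) := by positivity
  have hDpos : 0 < Dn β t := by
    by_contra h
    push_neg at h
    have : cpart β (t^4/β) ≤ 0 := by
      rw [hE1]
      exact mul_nonpos_of_nonneg_of_nonpos hfac.le h
    -- note hE1 : cpart β (t^4/β) = β/t^3 * exp(-(2t^2)) * Dn β t with assoc
    linarith [hC]
  have hN : (∫ x in (0:ℝ)..1, x * Real.exp (-(t^4/β * x) - β / x))
      = (β/t^2) * cpart β (t^4/β) + (β/t^3)^2 * Real.exp (-(2*t^2)) * Mn β t := by
    linarith [hE2]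
  rw [mpart, hN, hE1]
  field_simp
  ring
end
end

section
/- Fix β > 0. The single-particle variance v(λ) satisfies (2·λ^{3/2}/√β)·v(λ) → 1 as λ → +∞; equivalently, v(λ) = (√β/(2λ^{3/2}))·(1 + o(1)) as λ → ∞. -/
open MeasureTheory Filter

noncomputable section

namespace VA

def qq (β l : ℝ) : ℝ := Real.sqrt (Real.sqrt (β * l))
def xs (β l : ℝ) : ℝ := Real.sqrt (β / l)
def sg (β l : ℝ) : ℝ := xs β l / qq β l
def wone (β l : ℝ) : ℝ := (1 - xs β l) / sg β l
def EE (β l w : ℝ) : ℝ := Real.exp (-(w ^ 2 / (1 + w / qq β l)))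
def LL (β l : ℝ) (j : ℕ) : ℝ := ∫ w in (-qq β l)..(wone β l), w ^ j * EE β l w

variable {β l w : ℝ}

lemma qq_pos (hβ : 0 < β) (hl : 0 < l) : 0 < qq β l :=
  Real.sqrt_pos.2 (Real.sqrt_pos.2 (by positivity))

lemma xs_pos (hβ : 0 < β) (hl : 0 < l) : 0 < xs β l :=
  Real.sqrt_pos.2 (by positivity)

lemma sg_pos (hβ : 0 < β) (hl : 0 < l) : 0 < sg β l :=
  div_pos (xs_pos hβ hl) (qq_pos hβ hl)

lemma xs_lt_one (hβ : 0 < β) (hβl : β < l) : xs β l < 1 := by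
  have hl : 0 < l := hβ.trans hβl
  have h : β / l < 1 := (div_lt_one hl).2 hβl
  calc xs β l = Real.sqrt (β / l) := rfl
    _ < Real.sqrt 1 := Real.sqrt_lt_sqrt (by positivity) h
    _ = 1 := Real.sqrt_one

lemma wone_pos (hβ : 0 < β) (hβl : β < l) : 0 < wone β l := by
  have hl : 0 < l := hβ.trans hβl
  exact div_pos (by linarith [xs_lt_one hβ hβl]) (sg_pos hβ hl)

lemma hle (hβ : 0 < β) (hβl : β < l) : -qq β l ≤ wone β l := by
  have hl : 0 < l := hβ.trans hβl
  have := qq_pos hβ hl; have := wone_pos hβ hβl; linarith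

lemma qq_sq : qq β l ^ 2 = Real.sqrt (β * l) := Real.sq_sqrt (Real.sqrt_nonneg _)

lemma l_mul_xs (hβ : 0 < β) (hl : 0 < l) : l * xs β l = qq β l ^ 2 := by
  rw [qq_sq, xs, show l = Real.sqrt (l ^ 2) by rw [Real.sqrt_sq hl.le],
    ← Real.sqrt_mul (sq_nonneg l)]
  · congr 1
    rw [Real.sqrt_sq hl.le]
    field_simp

lemma beta_div_xs (hβ : 0 < β) (hl : 0 < l) : β / xs β l = qq β l ^ 2 := by
  rw [qq_sq, div_eq_iff (xs_pos hβ hl).ne', xs, ← Real.sqrt_mul (by positivity)]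
  rw [show β * l * (β / l) = β ^ 2 by field_simp, Real.sqrt_sq hβ.le]

lemma x_expand (hβ : 0 < β) (hl : 0 < l) (w : ℝ) :
    sg β l * w + xs β l = xs β l * (1 + w / qq β l) := by
  have hq := (qq_pos hβ hl).ne'
  rw [sg]; field_simp; ring

lemma t_pos (hβ : 0 < β) (hl : 0 < l) (hw : -qq β l < w) : 0 < 1 + w / qq β l := by
  have hq := qq_pos hβ hl
  have : (-1 : ℝ) < w / qq β l := by rw [lt_div_iff₀ hq]; linarith
  linarith

lemma x_pos (hβ : 0 < β) (hl : 0 < l) (hw : -qq β l < w) : 0 < sg β l * w + xs β l := by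
  rw [x_expand hβ hl]
  exact mul_pos (xs_pos hβ hl) (t_pos hβ hl hw)

lemma exp_id (hβ : 0 < β) (hl : 0 < l) (hw : -qq β l < w) :
    -(l * (sg β l * w + xs β l)) - β / (sg β l * w + xs β l)
      = -(2 * qq β l ^ 2) + -(w ^ 2 / (1 + w / qq β l)) := by
  have hq := qq_pos hβ hl
  have ht := t_pos hβ hl hw
  have hx := x_expand hβ hl w
  have hw' : w = (1 + w / qq β l - 1) * qq β l := by field_simp; ring
  rw [hx, show l * (xs β l * (1 + w / qq β l)) = (l * xs β l) * (1 + w / qq β l) by ring,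
    l_mul_xs hβ hl, div_mul_eq_div_div, beta_div_xs hβ hl]
  rw [hw']
  set t := 1 + w / qq β l
  have ht0 : t ≠ 0 := ht.ne'
  field_simp
  ring_nf
  rw [mul_inv_cancel₀ ht0]
  ring

lemma EE_nonneg : 0 ≤ EE β l w := (Real.exp_pos _).le

lemma EE_le_one (hβ : 0 < β) (hl : 0 < l) (hw : -qq β l < w) : EE β l w ≤ 1 := by
  rw [EE, Real.exp_le_one_iff, neg_nonpos]
  exact div_nonneg (sq_nonneg w) (t_pos hβ hl hw).le

lemma meas_j (β l : ℝ) (j : ℕ) : Measurable (fun w : ℝ => w ^ j * EE β l w) := by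
  unfold EE; fun_prop

lemma intLL (hβ : 0 < β) (hβl : β < l) (j : ℕ) :
    IntervalIntegrable (fun w : ℝ => w ^ j * EE β l w) volume (-qq β l) (wone β l) := by
  have hl : 0 < l := hβ.trans hβl
  rw [intervalIntegrable_iff_integrableOn_Ioc_of_le (hle hβ hβl)]
  apply Integrable.mono' (g := fun _ => (max (qq β l) |wone β l|) ^ j)
    (integrableOn_const measure_Ioc_lt_top.ne) (meas_j β l j).aestronglyMeasurable
  filter_upwards [ae_restrict_mem measurableSet_Ioc] with w hw
  have h1 : |w| ≤ max (qq β l) |wone β l| := by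
    rw [abs_le]
    refine ⟨?_, hw.2.trans ((le_abs_self _).trans (le_max_right _ _))⟩
    have := le_max_left (qq β l) |wone β l|
    linarith [hw.1]
  calc ‖w ^ j * EE β l w‖ = |w| ^ j * EE β l w := by
        rw [norm_mul, norm_pow, Real.norm_eq_abs, Real.norm_eq_abs,
          abs_of_nonneg EE_nonneg]
    _ ≤ (max (qq β l) |wone β l|) ^ j * 1 :=
        mul_le_mul (pow_le_pow_left₀ (abs_nonneg w) h1 j) (EE_le_one hβ hl hw.1)
          EE_nonneg (by positivity)
    _ = _ := mul_one _

lemma subst (hβ : 0 < β) (hβl : β < l) (k : ℕ) :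
    (∫ x in (0:ℝ)..1, x ^ k * Real.exp (-(l * x) - β / x))
      = sg β l * Real.exp (-(2 * qq β l ^ 2)) *
        ∫ w in (-qq β l)..(wone β l), (sg β l * w + xs β l) ^ k * EE β l w := by
  have hl : 0 < l := hβ.trans hβl
  have hq := qq_pos hβ hl
  have hσ := sg_pos hβ hl
  have h := intervalIntegral.integral_comp_mul_add (a := -qq β l) (b := wone β l)
      (f := fun x => x ^ k * Real.exp (-(l * x) - β / x)) hσ.ne' (xs β l)
  have e1 : sg β l * -qq β l + xs β l = 0 := by
    rw [sg]; field_simp; ring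
  have e2 : sg β l * wone β l + xs β l = 1 := by
    rw [wone, mul_div_cancel₀ _ hσ.ne']; ring
  rw [e1, e2] at h
  have h2 : (∫ x in (0:ℝ)..1, x ^ k * Real.exp (-(l * x) - β / x))
      = sg β l * ∫ w in (-qq β l)..(wone β l),
          (sg β l * w + xs β l) ^ k
            * Real.exp (-(l * (sg β l * w + xs β l)) - β / (sg β l * w + xs β l)) := by
    rw [h, smul_eq_mul, ← mul_assoc, mul_inv_cancel₀ hσ.ne', one_mul]
  rw [h2, mul_assoc]
  congr 1
  rw [intervalIntegral.integral_of_le (hle hβ hβl), intervalIntegral.integral_of_le (hle hβ hβl),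
    ← MeasureTheory.integral_const_mul]
  apply setIntegral_congr_fun measurableSet_Ioc
  intro w hw
  dsimp only
  rw [exp_id hβ hl hw.1, Real.exp_add, EE]
  ring

lemma M0 (hβ : 0 < β) (hβl : β < l) :
    (∫ w in (-qq β l)..(wone β l), (sg β l * w + xs β l) ^ 0 * EE β l w) = LL β l 0 := by
  rw [LL]; simp

lemma M1 (hβ : 0 < β) (hβl : β < l) :
    (∫ w in (-qq β l)..(wone β l), (sg β l * w + xs β l) ^ 1 * EE β l w)
      = sg β l * LL β l 1 + xs β l * LL β l 0 := by
  rw [LL, LL, ← intervalIntegral.integral_const_mul, ← intervalIntegral.integral_const_mul,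
    ← intervalIntegral.integral_add ((intLL hβ hβl 1).const_mul _) ((intLL hβ hβl 0).const_mul _)]
  apply intervalIntegral.integral_congr
  intro w _
  ring

lemma M2 (hβ : 0 < β) (hβl : β < l) :
    (∫ w in (-qq β l)..(wone β l), (sg β l * w + xs β l) ^ 2 * EE β l w)
      = sg β l ^ 2 * LL β l 2 + 2 * sg β l * xs β l * LL β l 1 + xs β l ^ 2 * LL β l 0 := by
  rw [LL, LL, LL, ← intervalIntegral.integral_const_mul, ← intervalIntegral.integral_const_mul,
    ← intervalIntegral.integral_const_mul,
    ← intervalIntegral.integral_add ((intLL hβ hβl 2).const_mul _) ((intLL hβ hβl 1).const_mul _),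
    ← intervalIntegral.integral_add
      (((intLL hβ hβl 2).const_mul _).add ((intLL hβ hβl 1).const_mul _))
      ((intLL hβ hβl 0).const_mul _)]
  apply intervalIntegral.integral_congr
  intro w _
  ring

lemma cpart_eq (hβ : 0 < β) (hβl : β < l) :
    cpart β l = sg β l * Real.exp (-(2 * qq β l ^ 2)) * LL β l 0 := by
  have : cpart β l = ∫ x in (0:ℝ)..1, x ^ 0 * Real.exp (-(l * x) - β / x) := by
    rw [cpart]; simp
  rw [this, subst hβ hβl 0, M0 hβ hβl]

lemma num1_eq (hβ : 0 < β) (hβl : β < l) :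
    (∫ x in (0:ℝ)..1, x * Real.exp (-(l * x) - β / x))
      = sg β l * Real.exp (-(2 * qq β l ^ 2)) * (sg β l * LL β l 1 + xs β l * LL β l 0) := by
  have : (∫ x in (0:ℝ)..1, x * Real.exp (-(l * x) - β / x))
      = ∫ x in (0:ℝ)..1, x ^ 1 * Real.exp (-(l * x) - β / x) := by simp
  rw [this, subst hβ hβl 1, M1 hβ hβl]

lemma num2_eq (hβ : 0 < β) (hβl : β < l) :
    (∫ x in (0:ℝ)..1, x ^ 2 * Real.exp (-(l * x) - β / x))
      = sg β l * Real.exp (-(2 * qq β l ^ 2)) *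
        (sg β l ^ 2 * LL β l 2 + 2 * sg β l * xs β l * LL β l 1 + xs β l ^ 2 * LL β l 0) := by
  rw [subst hβ hβl 2, M2 hβ hβl]

lemma vpart_eq (hβ : 0 < β) (hβl : β < l) (hL0 : LL β l 0 ≠ 0) :
    vpart β l = sg β l ^ 2 * (LL β l 2 * LL β l 0 - LL β l 1 ^ 2) / LL β l 0 ^ 2 := by
  have hl : 0 < l := hβ.trans hβl
  have hσ := sg_pos hβ hl
  have hE : sg β l * Real.exp (-(2 * qq β l ^ 2)) ≠ 0 := by positivity
  rw [vpart, mpart, cpart_eq hβ hβl, num1_eq hβ hβl, num2_eq hβ hβl]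
  field_simp
  ring

lemma factor (hβ : 0 < β) (hl : 0 < l) :
    2 * l ^ ((3:ℝ)/2) / Real.sqrt β * sg β l ^ 2 = 2 := by
  have hππ : Real.sqrt β * Real.sqrt β = β := Real.mul_self_sqrt hβ.le
  have hll : Real.sqrt l * Real.sqrt l = l := Real.mul_self_sqrt hl.le
  have hxs2 : xs β l ^ 2 = β / l := Real.sq_sqrt (by positivity)
  have hsg2 : sg β l ^ 2 = (β / l) / (Real.sqrt β * Real.sqrt l) := by
    rw [sg, div_pow, hxs2, qq_sq, Real.sqrt_mul hβ.le]
  have hrp : l ^ ((3:ℝ)/2) = l * Real.sqrt l := by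
    rw [show (3:ℝ)/2 = 1 + 1/2 by norm_num, Real.rpow_add hl, Real.rpow_one,
      ← Real.sqrt_eq_rpow]
  rw [hsg2, hrp]
  have hb : Real.sqrt β ≠ 0 := by positivity
  have hq : Real.sqrt l ≠ 0 := by positivity
  field_simp
  linear_combination -hππ

lemma main_id (hβ : 0 < β) (hβl : β < l) (hL0 : 0 < LL β l 0) :
    2 * l ^ ((3:ℝ)/2) / Real.sqrt β * vpart β l
      = 2 * (LL β l 2 * LL β l 0 - LL β l 1 ^ 2) / LL β l 0 ^ 2 := by
  have hl : 0 < l := hβ.trans hβl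
  rw [vpart_eq hβ hβl hL0.ne']
  rw [show 2 * l ^ ((3:ℝ)/2) / Real.sqrt β *
        (sg β l ^ 2 * (LL β l 2 * LL β l 0 - LL β l 1 ^ 2) / LL β l 0 ^ 2)
      = (2 * l ^ ((3:ℝ)/2) / Real.sqrt β * sg β l ^ 2) *
        ((LL β l 2 * LL β l 0 - LL β l 1 ^ 2) / LL β l 0 ^ 2) by ring,
    factor hβ hl]
  ring

lemma integrable_exp_neg_abs : Integrable (fun w : ℝ => Real.exp (-|w|)) := by
  rw [← integrableOn_univ, ← Set.Iic_union_Ioi (a := (0:ℝ)), integrableOn_union]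
  constructor
  · exact (integrableOn_exp_Iic 0).congr_fun
      (fun x hx => by rw [abs_of_nonpos hx, neg_neg]) measurableSet_Iic
  · exact ((exp_neg_integrableOn_Ioi 0 one_pos)).congr_fun
      (fun x hx => by dsimp only; rw [abs_of_pos hx, neg_one_mul]) measurableSet_Ioi

lemma qq_tendsto (hβ : 0 < β) : Tendsto (fun l => qq β l) atTop atTop := by
  have hs : Tendsto Real.sqrt atTop atTop := by
    refine (tendsto_rpow_atTop (by norm_num : (0:ℝ) < 1/2)).congr fun x => ?_
    exact (Real.sqrt_eq_rpow x).symm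
  have h1 : Tendsto (fun l : ℝ => β * l) atTop atTop := tendsto_id.const_mul_atTop hβ
  exact hs.comp (hs.comp h1)

lemma xs_tendsto (hβ : 0 < β) : Tendsto (fun l => xs β l) atTop (nhds 0) := by
  have h1 : Tendsto (fun l : ℝ => β / l) atTop (nhds 0) :=
    tendsto_const_nhds.div_atTop tendsto_id
  have h2 := (Real.continuous_sqrt.tendsto 0).comp h1
  simpa [xs, Real.sqrt_zero, Function.comp_def] using h2

lemma wone_ge (hβ : 0 < β) : ∀ᶠ l in atTop, qq β l ≤ wone β l := by
  filter_upwards [eventually_gt_atTop β, eventually_gt_atTop 0,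
    (xs_tendsto hβ).eventually (eventually_le_nhds (by norm_num : (0:ℝ) < 1/2))]
      with l h1 h2 h3
  have hl : 0 < l := h2
  have hxs := xs_pos hβ hl
  have hq := qq_pos hβ hl
  rw [wone, sg, div_div_eq_mul_div, le_div_iff₀ hxs]
  nlinarith

lemma psi_ge (hβ : 0 < β) (hl : 0 < l) (hq4 : 4 ≤ qq β l) (hw : -qq β l < w) :
    2 * |w| - 2 ≤ w ^ 2 / (1 + w / qq β l) := by
  set q := qq β l with hqdef
  have hq0 : (0:ℝ) < q := lt_of_lt_of_le (by norm_num) hq4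
  have ht : 0 < 1 + w / q := t_pos hβ hl hw
  rcases le_or_gt w 0 with h | h
  · have hb : 1 + w / q ≤ 1 := by
      have : w / q ≤ 0 := by
        rw [div_nonpos_iff]; exact Or.inr ⟨h, hq0.le⟩
      linarith
    have h2 : w ^ 2 ≤ w ^ 2 / (1 + w / q) := by
      rw [le_div_iff₀ ht]; nlinarith
    have habs : |w| = -w := abs_of_nonpos h
    nlinarith
  · rcases le_or_gt w q with h2 | h2
    · have hb : 1 + w / q ≤ 2 := by
        have : w / q ≤ 1 := (div_le_one hq0).2 h2
        linarith
      have h3 : w ^ 2 / 2 ≤ w ^ 2 / (1 + w / q) :=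
        div_le_div_of_nonneg_left (sq_nonneg w) ht hb
      have habs : |w| = w := abs_of_pos h
      nlinarith [sq_nonneg (w - 2)]
    · have h1q : 1 ≤ w / q := (one_le_div hq0).2 h2.le
      have hb : 1 + w / q ≤ 2 * w / q := by
        rw [mul_div_assoc]; linarith
      have h3 : w * q / 2 ≤ w ^ 2 / (1 + w / q) := by
        rw [div_le_div_iff₀ (by norm_num) ht]
        have e : w ^ 2 * 2 = (w * q) * (2 * w / q) := by field_simp
        nlinarith [mul_le_mul_of_nonneg_left hb (show (0:ℝ) ≤ w * q by positivity)]
      have habs : |w| = w := abs_of_pos h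
      nlinarith [mul_le_mul_of_nonneg_left hq4 h.le]

lemma abs_pow_le (j : ℕ) (hj : j ≤ 2) (w : ℝ) : |w| ^ j ≤ 4 * Real.exp |w| := by
  have h0 := abs_nonneg w
  have he := Real.add_one_le_exp |w|
  have hp := Real.exp_pos |w|
  interval_cases j
  · simpa using by nlinarith
  · simpa using by nlinarith
  · have h2 := Real.add_one_le_exp (|w| / 2)
    have hs : Real.exp (|w| / 2) * Real.exp (|w| / 2) = Real.exp |w| := by
      rw [← Real.exp_add]; ring_nf
    nlinarith [Real.exp_pos (|w| / 2)]

lemma tendstoLL (hβ : 0 < β) (j : ℕ) (hj : j ≤ 2) :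
    Tendsto (fun l => LL β l j) atTop (nhds (∫ w : ℝ, w ^ j * Real.exp (-w ^ 2))) := by
  have key := MeasureTheory.tendsto_integral_filter_of_dominated_convergence
      (μ := (volume : Measure ℝ)) (l := atTop)
      (F := fun l w => (Set.Ioc (-qq β l) (wone β l)).indicator (fun w => w ^ j * EE β l w) w)
      (f := fun w : ℝ => w ^ j * Real.exp (-w ^ 2))
      (bound := fun w => 4 * Real.exp 2 * Real.exp (-|w|))
      ?_ ?_ ?_ ?_
  · refine key.congr' ?_
    filter_upwards [eventually_gt_atTop β] with l hβl
    rw [integral_indicator measurableSet_Ioc, LL,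
      intervalIntegral.integral_of_le (hle hβ hβl)]
  · exact Eventually.of_forall fun l =>
      ((meas_j β l j).indicator measurableSet_Ioc).aestronglyMeasurable
  · filter_upwards [(qq_tendsto hβ).eventually_ge_atTop 4, eventually_gt_atTop β]
      with l hq4 hβl
    refine ae_of_all _ fun w => ?_
    have hl : 0 < l := hβ.trans hβl
    by_cases hw : w ∈ Set.Ioc (-qq β l) (wone β l)
    · rw [Set.indicator_of_mem hw]
      have hψ := psi_ge hβ hl hq4 hw.1
      have hEE : EE β l w ≤ Real.exp (2 - 2 * |w|) := by
        rw [EE, Real.exp_le_exp]; linarith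
      calc ‖w ^ j * EE β l w‖ = |w| ^ j * EE β l w := by
            rw [norm_mul, norm_pow, Real.norm_eq_abs, Real.norm_eq_abs,
              abs_of_nonneg EE_nonneg]
        _ ≤ (4 * Real.exp |w|) * Real.exp (2 - 2 * |w|) :=
            mul_le_mul (abs_pow_le j hj w) hEE EE_nonneg (by positivity)
        _ = 4 * Real.exp 2 * Real.exp (-|w|) := by
            rw [mul_assoc, ← Real.exp_add, mul_assoc, ← Real.exp_add]
            ring_nf
    · rw [Set.indicator_of_notMem hw]
      simp only [norm_zero]
      positivity
  · exact (integrable_exp_neg_abs.const_mul _)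
  · refine ae_of_all _ fun w => ?_
    have hev : ∀ᶠ l in atTop, w ∈ Set.Ioc (-qq β l) (wone β l) := by
      filter_upwards [(qq_tendsto hβ).eventually_gt_atTop |w|, wone_ge hβ] with l h1 h2
      have := abs_lt.1 h1
      exact ⟨this.1, le_trans this.2.le h2⟩
    have h2 : Tendsto (fun l => 1 + w / qq β l) atTop (nhds 1) := by
      have := tendsto_const_nhds (α := ℝ) (x := w) |>.div_atTop (qq_tendsto hβ)
      simpa using tendsto_const_nhds.add this
    have h3 : Tendsto (fun l => w ^ 2 / (1 + w / qq β l)) atTop (nhds (w ^ 2)) := by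
      have := (tendsto_const_nhds (x := w ^ 2)).div h2 one_ne_zero
      simpa [Pi.div_def] using this
    have h4 : Tendsto (fun l => w ^ j * EE β l w) atTop (nhds (w ^ j * Real.exp (-w ^ 2))) := by
      unfold EE
      exact ((Real.continuous_exp.tendsto _).comp h3.neg).const_mul _
    refine h4.congr' ?_
    filter_upwards [hev] with l hmem
    rw [Set.indicator_of_mem hmem]

lemma gauss0 : ∫ w : ℝ, w ^ 0 * Real.exp (-w ^ 2) = Real.sqrt Real.pi := by
  have := integral_gaussian 1
  simpa using this

lemma gauss1 : ∫ w : ℝ, w ^ 1 * Real.exp (-w ^ 2) = 0 := by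
  simp only [pow_one]
  have hint : Integrable (fun x : ℝ => x * Real.exp (-x ^ 2)) := by
    have := integrable_mul_exp_neg_mul_sq (b := (1:ℝ)) one_pos
    simpa using this
  have hs := intervalIntegral.integral_Iic_add_Ioi (b := (0:ℝ))
    hint.integrableOn hint.integrableOn
  have hneg : (∫ x in Set.Iic (0:ℝ), x * Real.exp (-x ^ 2))
      = -∫ x in Set.Ioi (0:ℝ), x * Real.exp (-x ^ 2) := by
    rw [show Set.Iic (0:ℝ) = Set.Iic (-0) by norm_num,
      ← integral_comp_neg_Ioi (0:ℝ) (fun x => x * Real.exp (-x ^ 2))]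
    rw [← integral_neg]
    congr 1
    funext x
    simp [neg_sq]
  linarith

lemma gauss2 : ∫ w : ℝ, w ^ 2 * Real.exp (-w ^ 2) = Real.sqrt Real.pi / 2 := by
  have h1 : (∫ w : ℝ, w ^ 2 * Real.exp (-w ^ 2))
      = 2 * ∫ x in Set.Ioi (0:ℝ), x ^ 2 * Real.exp (-x ^ 2) := by
    rw [← integral_comp_abs (f := fun x => x ^ 2 * Real.exp (-x ^ 2))]
    congr 1
    funext w
    rw [sq_abs]
  have h2 : (∫ x in Set.Ioi (0:ℝ), x ^ 2 * Real.exp (-x ^ 2))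
      = 1 / 2 * Real.Gamma (3 / 2) := by
    have h := integral_rpow_mul_exp_neg_rpow (p := 2) (q := 2) two_pos (by norm_num)
    rw [show ((2:ℝ) + 1) / 2 = 3 / 2 by norm_num] at h
    rw [← h]
    refine setIntegral_congr_fun measurableSet_Ioi fun x hx => ?_
    rw [← Real.rpow_natCast x 2]
    norm_num
  have h3 : Real.Gamma (3 / 2) = Real.sqrt Real.pi / 2 := by
    rw [show (3/2 : ℝ) = 1/2 + 1 by norm_num, Real.Gamma_add_one (by norm_num),
      Real.Gamma_one_half_eq]
    ring
  rw [h1, h2, h3]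
  ring

end VA

open VA in
/-- `v(λ) = (√β/(2λ^{3/2}))(1 + o(1))` as `λ → ∞`. -/
theorem var_asymptotic (β : ℝ) (hβ : 0 < β) :
    Tendsto (fun l : ℝ => 2 * l ^ ((3:ℝ)/2) / Real.sqrt β * vpart β l) atTop (nhds 1) := by
  have T0 := tendstoLL hβ 0 (by norm_num)
  have T1 := tendstoLL hβ 1 (by norm_num)
  have T2 := tendstoLL hβ 2 (by norm_num)
  rw [gauss0] at T0
  rw [gauss1] at T1
  rw [gauss2] at T2
  have hπ : (0:ℝ) < Real.sqrt Real.pi := Real.sqrt_pos.2 Real.pi_pos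
  have hlim : Tendsto (fun l => 2 * (LL β l 2 * LL β l 0 - LL β l 1 ^ 2) / LL β l 0 ^ 2)
      atTop (nhds (2 * (Real.sqrt Real.pi / 2 * Real.sqrt Real.pi - 0 ^ 2)
        / Real.sqrt Real.pi ^ 2)) := by
    exact (((T2.mul T0).sub (T1.pow 2)).const_mul 2).div (T0.pow 2) (by positivity)
  have hval : 2 * (Real.sqrt Real.pi / 2 * Real.sqrt Real.pi - 0 ^ 2)
      / Real.sqrt Real.pi ^ 2 = 1 := by
    have hππ : Real.sqrt Real.pi * Real.sqrt Real.pi = Real.pi :=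
      Real.mul_self_sqrt Real.pi_pos.le
    rw [show Real.sqrt Real.pi ^ 2 = Real.pi from Real.sq_sqrt Real.pi_pos.le]
    field_simp
    rw [Real.sq_sqrt Real.pi_pos.le]; ring
  rw [hval] at hlim
  refine hlim.congr' ?_
  have hL0pos : ∀ᶠ l in atTop, 0 < LL β l 0 :=
    T0.eventually (eventually_gt_nhds hπ)
  filter_upwards [eventually_gt_atTop β, hL0pos] with l h1 h2
  exact (main_id hβ h1 h2).symm
end
end
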